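/- (Theorem 1 c), first half; after Stichtenoth, Satz 5.) Let f(X) = X^m with p ∤ m, m ≥ 2, (m−1)(p−1) > 2, and assume m−1 is NOT a power of p. Then S(f) = {0}; equivalently, |G_{∞,1}(X^m)| = p. -/

import Mathlib

open Polynomial

/-- `S(f)`: the set of `y ∈ k` such that `f(X+y) - f(X) - f(y) = P(X) - P(X)^p`
for some polynomial `P` with `P(0) = 0`. -/
def Sf (p : ℕ) {k : Type*} [Field k] (f : k[X]) : Set k :=
  {y | ∃ P : k[X], P.coeff 0 = 0 ∧
    f.comp (X + C y) - f - C (f.eval y) = P - P ^ p}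

/-- One step of Lucas' theorem in `ZMod p`. -/
lemma lucas_step (p : ℕ) (hp : p.Prime) (a b r s : ℕ) (hr : r < p) (hs : s < p) :
    ((p * a + r).choose (p * b + s) : ZMod p) = (r.choose s : ZMod p) * (a.choose b) := by
  haveI : Fact p.Prime := ⟨hp⟩
  have h := (Choose.choose_modEq_choose_mod_mul_choose_div_nat
      (n := p * a + r) (k := p * b + s) (p := p))
  have h1 : (p * a + r) % p = r := by rw [Nat.mul_add_mod, Nat.mod_eq_of_lt hr]
  have h2 : (p * b + s) % p = s := by rw [Nat.mul_add_mod, Nat.mod_eq_of_lt hs]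
  have h3 : (p * a + r) / p = a := by
    rw [Nat.mul_add_div hp.pos, Nat.div_eq_of_lt hr, add_zero]
  have h4 : (p * b + s) / p = b := by
    rw [Nat.mul_add_div hp.pos, Nat.div_eq_of_lt hs, add_zero]
  rw [h1, h2, h3, h4] at h
  have := (ZMod.natCast_eq_natCast_iff _ _ _).mpr h
  push_cast at this
  exact this

/-- `p` does not divide `choose (p^t * u) (p^t)` when `p ∤ u`. -/
lemma not_dvd_choose_pow_mul (p : ℕ) (hp : p.Prime) (t u : ℕ) (hu : ¬ p ∣ u) (hu0 : u ≠ 0) :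
    ¬ p ∣ (p ^ t * u).choose (p ^ t) := by
  haveI : Fact p.Prime := ⟨hp⟩
  induction t with
  | zero =>
      simpa [Nat.choose_one_right] using hu
  | succ t ih =>
      intro hdvd
      apply ih
      have key : ((p ^ (t + 1) * u).choose (p ^ (t + 1)) : ZMod p)
          = ((p ^ t * u).choose (p ^ t) : ZMod p) := by
        have hstep := lucas_step p hp (p ^ t * u) (p ^ t) 0 0 hp.pos hp.pos
        have e1 : p ^ (t + 1) * u = p * (p ^ t * u) + 0 := by ring
        have e2 : p ^ (t + 1) = p * p ^ t + 0 := by ring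
        rw [e1, e2, hstep]
        simp
      rw [← ZMod.natCast_eq_zero_iff] at hdvd ⊢
      rw [← key]
      exact hdvd

/-- In characteristic `p`, `(P^p).coeff j = 0` when `p ∤ j`. -/
lemma coeff_pow_char_eq_zero {p : ℕ} (hp : p.Prime) {k : Type*} [Field k] [CharP k p]
    (P : k[X]) {j : ℕ} (hj : ¬ p ∣ j) : (P ^ p).coeff j = 0 := by
  haveI : Fact p.Prime := ⟨hp⟩
  rw [← Polynomial.map_frobenius_expand p P, Polynomial.coeff_map, Polynomial.coeff_expand hp.pos]
  simp [hj]

/-- Theorem 1 c), first half (Stichtenoth, Satz 5): for `f = X^m` with `p ∤ m`, genus `> 1`,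
and `m - 1` not a power of `p`, one has `S(f) = {0}`, i.e. `|G_{∞,1}(X^m)| = p`. -/
theorem Sf_monomial_eq_singleton_zero (p : ℕ) (hp : p.Prime)
    (k : Type*) [Field k] [IsAlgClosed k] [CharP k p]
    (m : ℕ) (hpm : ¬ p ∣ m) (hm2 : 2 ≤ m) (hg : 2 < (m - 1) * (p - 1))
    (hpow : ¬ ∃ s : ℕ, m - 1 = p ^ s) :
    Sf p ((X : k[X]) ^ m) = {0} := by
  haveI : Fact p.Prime := ⟨hp⟩
  apply Set.eq_singleton_iff_unique_mem.mpr
  constructor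
  · refine ⟨0, by simp, ?_⟩
    simp [zero_pow (by omega : m ≠ 0), zero_pow hp.ne_zero]
  · rintro y ⟨P, hP0, hP⟩
    by_contra hy
    have hyk : (y : k) ≠ 0 := hy
    have heq : (X + C y) ^ m - X ^ m - C (y ^ m) = P - P ^ p := by
      rw [← hP]
      simp [Polynomial.pow_comp]
    -- coefficients of the left side
    have hcoeff : ∀ j, j ≠ 0 → j ≠ m →
        ((X + C y) ^ m - X ^ m - C (y ^ m)).coeff j = y ^ (m - j) * (m.choose j : k) := by
      intro j hj0 hjm
      rw [Polynomial.coeff_sub, Polynomial.coeff_sub, Polynomial.coeff_X_add_C_pow,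
        Polynomial.coeff_X_pow, Polynomial.coeff_C]
      simp [hj0, hjm]
    -- the coefficient at m-1 is nonzero
    have hm1 : m - 1 ≠ 0 := by omega
    have hmm : m - 1 ≠ m := by omega
    have hclm : ((X + C y) ^ m - X ^ m - C (y ^ m)).coeff (m - 1) ≠ 0 := by
      rw [hcoeff _ hm1 hmm]
      have h1 : m - (m - 1) = 1 := by omega
      have h2 : m.choose (m - 1) = m := by
        have := Nat.choose_symm (show 1 ≤ m by omega)
        rw [Nat.choose_one_right] at this
        exact this
      rw [h1, h2, pow_one]
      have hmk : (m : k) ≠ 0 := by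
        rw [Ne, CharP.cast_eq_zero_iff k p]
        exact hpm
      exact mul_ne_zero hyk hmk
    -- P ≠ 0
    have hPne : P ≠ 0 := by
      intro h
      apply hclm
      rw [heq, h]
      simp [zero_pow hp.ne_zero]
    set d := P.natDegree with hd
    have hd1 : 1 ≤ d := by
      by_contra h
      have hde0 : d = 0 := by omega
      have : P = C (P.coeff 0) := Polynomial.eq_C_of_natDegree_eq_zero hde0
      rw [hP0] at this
      simp at this
      exact hPne this
    have hdp : (P ^ p).natDegree = p * d := by
      rw [Polynomial.natDegree_pow]
    have hdlt : d < p * d := by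
      have := hp.two_le
      nlinarith
    have hpd0 : p * d ≠ 0 := (Nat.mul_pos hp.pos (by omega)).ne'
    -- coefficient of RHS at p*d is nonzero
    have hlc : (P - P ^ p).coeff (p * d) ≠ 0 := by
      rw [Polynomial.coeff_sub]
      have h1 : P.coeff (p * d) = 0 := Polynomial.coeff_eq_zero_of_natDegree_lt hdlt
      have h2 : (P ^ p).coeff (p * d) = P.leadingCoeff ^ p := by
        rw [← hdp, ← Polynomial.leadingCoeff, Polynomial.leadingCoeff_pow]
      rw [h1, h2, zero_sub, neg_ne_zero]
      exact pow_ne_zero _ (Polynomial.leadingCoeff_ne_zero.mpr hPne)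
    -- RHS has coefficients zero above p*d
    have hrhs_deg : ∀ j, p * d < j → (P - P ^ p).coeff j = 0 := by
      intro j hj
      have hle : (P - P ^ p).natDegree ≤ p * d :=
        le_trans (Polynomial.natDegree_sub_le _ _)
          (by rw [hdp]; exact max_le hdlt.le le_rfl)
      exact Polynomial.coeff_eq_zero_of_natDegree_lt (lt_of_le_of_lt hle hj)
    -- p * d = m - 1
    have hpd : p * d = m - 1 := by
      have hlt : p * d < m := by
        by_contra h
        push_neg at h
        rcases eq_or_lt_of_le h with h | h
        · rw [← heq] at hlc
          apply hlc
          rw [Polynomial.coeff_sub, Polynomial.coeff_sub, Polynomial.coeff_X_add_C_pow,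
            Polynomial.coeff_X_pow, Polynomial.coeff_C, ← h]
          simp [Nat.choose_self, (by omega : m ≠ 0)]
          intro h0
          exact absurd h0 (by omega)
        · rw [← heq] at hlc
          apply hlc
          rw [hcoeff _ hpd0 (by omega), Nat.choose_eq_zero_of_lt h]
          simp
      have hge : m - 1 ≤ p * d := by
        by_contra h
        push_neg at h
        have := hrhs_deg (m - 1) h
        rw [← heq] at this
        exact hclm this
      omega
    -- d is not a power of p
    have hdpow : ∀ s : ℕ, d ≠ p ^ s := by
      intro s hs
      exact hpow ⟨s + 1, by rw [← hpd, hs, pow_succ, mul_comm]⟩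
    have hd0 : d ≠ 0 := by omega
    set t := d.factorization p with ht
    set u := d / p ^ t with hu
    have hdu : p ^ t * u = d := Nat.ordProj_mul_ordCompl_eq_self d p
    have hpu : ¬ p ∣ u := Nat.not_dvd_ordCompl hp hd0
    have hu0 : u ≠ 0 := by
      intro h
      rw [h, mul_zero] at hdu
      exact hd0 hdu.symm
    have hu1 : u ≠ 1 := by
      intro h
      rw [h, mul_one] at hdu
      exact hdpow t hdu.symm
    have hu2 : 2 ≤ u := by
      rcases Nat.lt_or_ge u 2 with h | h
      · interval_cases u <;> simp_all
      · exact h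
    have hpt1 : 1 ≤ p ^ t := Nat.one_le_pow _ _ hp.pos
    have hd2pt : 2 * p ^ t ≤ d := by
      calc 2 * p ^ t = p ^ t * 2 := mul_comm _ _
        _ ≤ p ^ t * u := Nat.mul_le_mul_left _ hu2
        _ = d := hdu
    set e := d - p ^ t with he
    set j := p * e + 1 with hj
    have hepd : e + p ^ t = d := by omega
    have hed : e < d := by omega
    -- d < j
    have hdj : d < j := by
      obtain ⟨q, hq⟩ : ∃ q, p = q + 1 := ⟨p - 1, by have := hp.two_le; omega⟩
      have hq1 : 1 ≤ q := by have := hp.two_le; omega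
      have key : p * p ^ t + d ≤ p * d := by
        subst hq
        nlinarith [hd2pt, hpt1]
      have hsplit : p * d = p * e + p * p ^ t := by rw [← hepd]; ring
      omega
    -- j ≤ m - 1
    have hjm1 : j ≤ m - 1 := by
      rw [← hpd, hj]
      have h1 : p * e + p ≤ p * d := by
        calc p * e + p = p * (e + 1) := by ring
          _ ≤ p * d := Nat.mul_le_mul_left _ hed
      have := hp.two_le
      omega
    -- p ∤ j
    have hpj : ¬ p ∣ j := by
      rw [hj]
      intro hdvd
      have h1 : p ∣ 1 := (Nat.dvd_add_right ⟨e, rfl⟩).mp hdvd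
      exact hp.one_lt.ne' (Nat.dvd_one.mp h1)
    -- coefficient of RHS at j is zero
    have hrhsj : (P - P ^ p).coeff j = 0 := by
      rw [Polynomial.coeff_sub, Polynomial.coeff_eq_zero_of_natDegree_lt hdj,
        coeff_pow_char_eq_zero hp P hpj, sub_zero]
    have hj0 : j ≠ 0 := by omega
    have hjm : j ≠ m := by omega
    have hcast : (m.choose j : k) = 0 := by
      have h1 := hcoeff j hj0 hjm
      rw [heq, hrhsj] at h1
      rcases mul_eq_zero.mp h1.symm with h | h
      · exact absurd h (pow_ne_zero _ hyk)
      · exact h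
    have hdvd : p ∣ m.choose j := (CharP.cast_eq_zero_iff k p _).mp hcast
    have hm_eq : m = p * d + 1 := by omega
    have hlucas : ((m.choose j : ℕ) : ZMod p) = ((d.choose e : ℕ) : ZMod p) := by
      rw [hm_eq, hj]
      have h1 := lucas_step p hp d e 1 1 hp.one_lt hp.one_lt
      simpa using h1
    have hde : d.choose e = d.choose (p ^ t) := by
      rw [he]
      exact Nat.choose_symm (by omega)
    have hnd : ¬ p ∣ d.choose e := by
      rw [hde, ← hdu]
      exact not_dvd_choose_pow_mul p hp t u hpu hu0
    apply hnd
    rw [← ZMod.natCast_eq_zero_iff, ← hlucas, ZMod.natCast_eq_zero_iff]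
    exact hdvd
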